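/- Let 𝕂 be a field of characteristic ≠ 2, q, r ∈ 𝕂ˣ, m, n ∈ ℕ₀ with (m)_q! · ∏_{i=0}^{m-1}(1-q^i r) ≠ 0. If there exist j₁ < j₂ ≤ m with q^{n+j_t-1}r² = 1 for t = 1, 2, then q = 1 and r = -1. -/
import Mathlib


variable {K : Type*} [Field K]

/-- The q-number `(k)_x = ∑_{i=0}^{k-1} x^i`. -/
def qNum (x : K) (k : ℕ) : K := ∑ i ∈ Finset.range k, x ^ i

/-- The q-factorial `(m)_q! = ∏_{k=1}^m (k)_q`. -/
def qFac (q : K) (m : ℕ) : K := ∏ k ∈ Finset.range m, qNum q (k + 1)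

/-- `b_m = ∏_{i=0}^{m-1} (1 - q^i r)`. -/
def bProd (q r : K) (m : ℕ) : K := ∏ i ∈ Finset.range m, (1 - q ^ i * r)

/-- The recursively defined set 𝕁 = 𝕁^p_{q,r,s}. -/
def memJ (q r s : K) : ℕ → Prop
  | j => q ^ (j * (j - 1) / 2) * (-r) ^ j * s = -1 ∧
      ∀ n, n < j → memJ q r s n →
        if (j - n) % 2 = 0
        then qNum (q ^ (n + j - 1) * r ^ 2) ((j - n) / 2) = 0
        else qNum (-(q ^ ((n + j - 1) / 2) * r)) (j - n) = 0
  termination_by j => j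

/-- The subset 𝕁₁ ⊆ 𝕁 (condition (1) of Lemma le:J). -/
def memJ1 (q r s : K) (j : ℕ) : Prop :=
  memJ q r s j ∧ ∀ k, k < j → memJ q r s k → q ^ (k + j - 1) * r ^ 2 ≠ 1

/-- The subset 𝕁₂ ⊆ 𝕁 (condition (2) of Lemma le:J). -/
def memJ2 (q r s : K) (n : ℕ) : Prop :=
  memJ q r s n ∧ ∃ j, j < n ∧ memJ q r s j ∧ q ^ (n + j - 1) * r ^ 2 = 1

theorem stmt_8 (hK : (2 : K) ≠ 0) (q r : K) (hq : q ≠ 0) (hr : r ≠ 0) (m n : ℕ)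
    (hm : qFac q m * bProd q r m ≠ 0) (j₁ j₂ : ℕ) (h12 : j₁ < j₂) (h2m : j₂ ≤ m)
    (h1 : q ^ ((n : ℤ) + (j₁ : ℤ) - 1) * r ^ 2 = 1)
    (h2 : q ^ ((n : ℤ) + (j₂ : ℤ) - 1) * r ^ 2 = 1) :
    q = 1 ∧ r = -1 := by
  have hFac : qFac q m ≠ 0 := fun h => hm (by rw [h, zero_mul])
  have hB : bProd q r m ≠ 0 := fun h => hm (by rw [h, mul_zero])
  set d := j₂ - j₁ with hd
  have hd1 : 1 ≤ d := by omega
  have hdm : d ≤ m := le_trans (Nat.sub_le _ _) h2m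
  have hqd : q ^ d = 1 := by
    have : q ^ ((n : ℤ) + (j₂ : ℤ) - 1) = q ^ ((n : ℤ) + (j₁ : ℤ) - 1) := by
      have hr2 : r ^ 2 ≠ 0 := pow_ne_zero _ hr
      exact mul_right_cancel₀ hr2 (h2.trans h1.symm)
    have hz : q ^ ((d : ℤ)) = 1 := by
      have hcast : ((n : ℤ) + (j₂ : ℤ) - 1) = ((n : ℤ) + (j₁ : ℤ) - 1) + (d : ℤ) := by
        have : (d : ℤ) = (j₂ : ℤ) - (j₁ : ℤ) := by
          simp [hd, Int.ofNat_sub h12.le]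
        rw [this]; ring
      rw [hcast, zpow_add₀ hq] at this
      have h0 : q ^ ((n : ℤ) + (j₁ : ℤ) - 1) ≠ 0 := zpow_ne_zero _ hq
      have h0 : q ^ ((n : ℤ) + (j₁ : ℤ) - 1) ≠ 0 := zpow_ne_zero _ hq
      field_simp at this
      exact_mod_cast this
    exact_mod_cast hz
  have hq1 : q = 1 := by
    by_contra hq1
    have hnum : qNum q d = 0 := by
      rw [qNum, geom_sum_eq hq1, hqd, sub_self, zero_div]
    have : qNum q d ≠ 0 := by
      have := Finset.prod_ne_zero_iff.mp hFac (d - 1)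
        (Finset.mem_range.mpr (by omega))
      rwa [Nat.sub_add_cancel hd1] at this
    exact this hnum
  have hr2 : r ^ 2 = 1 := by
    rw [hq1, one_zpow, one_mul] at h1
    exact h1
  have hfact : (r - 1) * (r + 1) = 0 := by linear_combination hr2
  have hrcases : r = 1 ∨ r = -1 := by
    rcases mul_eq_zero.mp hfact with h | h
    · left; exact sub_eq_zero.mp h
    · right; exact eq_neg_of_add_eq_zero_left h
  rcases hrcases with h | h
  · exfalso
    apply hB
    rw [bProd]
    apply Finset.prod_eq_zero (Finset.mem_range.mpr (show 0 < m by omega))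
    rw [h, pow_zero, one_mul, sub_self]
  · exact ⟨hq1, h⟩
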